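/- Let X be a compact metric space and (f_k)_{k≥1} functions on X, each Lipschitz with constant L and with ‖f_k‖_∞ ≥ δ > 0 for all k. If Σ_{k≥1} f_k(x)² < ∞ for every x ∈ X, we reach a contradiction; i.e., there cannot exist infinitely many uniformly Lipschitz functions each of sup-norm at least δ whose squares are pointwise summable on a compact metric space. -/

import Mathlib

/-- On a compact metric space there cannot exist infinitely many uniformly Lipschitz
functions, each of sup-norm at least `δ > 0`, whose squares are pointwise summable. -/
theorem no_uniformly_lipschitz_pointwise_square_summable_family
    {X : Type*} [MetricSpace X] [CompactSpace X] [Nonempty X]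
    (L δ : ℝ) (hL : 0 < L) (hδ : 0 < δ)
    (f : ℕ → X → ℝ)
    (hLip : ∀ k, ∀ x y : X, |f k x - f k y| ≤ L * dist x y)
    (hsup : ∀ k, ∃ x : X, δ ≤ |f k x|)
    (hsum : ∀ x : X, Summable fun k => (f k x) ^ 2) :
    False := by
  set r : ℝ := δ / (2 * L) with hr
  have hrpos : 0 < r := by positivity
  obtain ⟨t, -, htfin, hcov⟩ :=
    finite_cover_balls_of_compact (isCompact_univ (X := X)) hrpos
  -- for each k pick a net point where |f k| ≥ δ/2
  have key : ∀ k, ∃ y ∈ t, δ / 2 ≤ |f k y| := by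
    intro k
    obtain ⟨x, hx⟩ := hsup k
    obtain ⟨y, hyt, hxy⟩ := Set.mem_iUnion₂.1 (hcov (Set.mem_univ x))
    refine ⟨y, hyt, ?_⟩
    have hd : dist x y < r := Metric.mem_ball.1 hxy
    have h1 : |f k x - f k y| ≤ L * r := by
      calc |f k x - f k y| ≤ L * dist x y := hLip k x y
        _ ≤ L * r := by nlinarith
    have hLr : L * r = δ / 2 := by
      field_simp [hr]
      rw [hr]; field_simp
    have : |f k x| - |f k y| ≤ |f k x - f k y| := abs_sub_abs_le_abs_sub _ _
    linarith [hLr ▸ h1]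
  choose g hg1 hg2 using key
  -- pigeonhole: some y ∈ t has infinitely many k with g k = y
  haveI : Finite t := htfin
  have : ∃ y : t, {k : ℕ | g k = y}.Infinite := by
    by_contra h
    push_neg at h
    have : (Set.univ : Set ℕ).Finite := by
      have := Set.finite_iUnion (ι := t) fun y => (h y)
      refine this.subset fun k _ => ?_
      exact Set.mem_iUnion.2 ⟨⟨g k, hg1 k⟩, rfl⟩
    exact Set.infinite_univ this
  obtain ⟨y, hy⟩ := this
  have hten := (hsum y).tendsto_atTop_zero
  have hfreq : ∃ᶠ k in Filter.atTop, (δ / 2) ^ 2 ≤ (f k (y : X)) ^ 2 := by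
    refine Filter.frequently_atTop.2 fun n => ?_
    obtain ⟨k, hk, hkn⟩ := hy.exists_gt n
    refine ⟨k, hkn.le, ?_⟩
    have := hg2 k
    rw [hk] at this
    have h2 : 0 ≤ δ / 2 := by positivity
    calc (δ/2)^2 ≤ |f k (y:X)|^2 := by nlinarith
      _ = (f k (y:X))^2 := sq_abs _
  have := hten.eventually (eventually_lt_nhds (show (0:ℝ) < (δ/2)^2 by positivity))
  obtain ⟨k, h1, h2⟩ := (hfreq.and_eventually this).exists
  linarith
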